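/- Let f be a monic polynomial of degree n ≥ 2 with complex coefficients having distinct roots λ_1,…,λ_k with multiplicities r_1,…,r_k, let z_{n-1} be the root of f^{(n-1)} and z_{n-2} a root of f^{(n-2)}. Then for every z ∈ ℂ, (z_{n-1} − z_{n-2})^2 = (1/(n(n−1))) · [ Σ_{j=1}^k r_j (λ_j − z)^2 − n (z_{n-1} − z)^2 ]. -/

import Mathlib

open Polynomial

private lemma descFac1 : ∀ m : ℕ, (m + 1).descFactorial m = (m + 1).factorial
  | 0 => rfl
  | m + 1 => by
    rw [Nat.succ_descFactorial_succ, descFac1 m]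
    rfl

private lemma descFac2 : ∀ m : ℕ, 2 * (m + 2).descFactorial m = (m + 2).factorial
  | 0 => rfl
  | m + 1 => by
    rw [show m + 1 + 2 = (m + 2) + 1 from rfl, Nat.succ_descFactorial_succ,
      Nat.factorial_succ, ← descFac2 m]
    ring

private lemma esymm_one' (s : Multiset ℂ) : s.esymm 1 = s.sum := by
  rw [Multiset.esymm, Multiset.powersetCard_one, Multiset.map_map]
  simp [Function.comp]

private lemma sq_sum' (s : Multiset ℂ) :
    s.sum ^ 2 = (s.map (· ^ 2)).sum + 2 * s.esymm 2 := by
  induction s using Multiset.induction_on with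
  | empty => simp [Multiset.esymm, Multiset.powersetCard_zero_right 1]
  | cons a s ih =>
    have h2 : (a ::ₘ s).esymm 2 = a * s.sum + s.esymm 2 := by
      rw [Multiset.esymm, show (2:ℕ) = 1 + 1 from rfl, Multiset.powersetCard_cons,
        Multiset.map_add, Multiset.sum_add, Multiset.map_map, add_comm]
      congr 1
      rw [Multiset.powersetCard_one, Multiset.map_map]
      simp only [Function.comp, Multiset.prod_cons, Multiset.prod_singleton]
      simpa using Multiset.sum_map_mul_left (s := s) (a := a) (f := id)
    rw [Multiset.sum_cons, Multiset.map_cons, Multiset.sum_cons, h2]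
    ring_nf
    linear_combination ih

theorem stmt_2 (n k : ℕ) (hn : 2 ≤ n) (l : Fin k → ℂ) (hl : Function.Injective l)
    (r : Fin k → ℕ) (hr : ∀ j, 1 ≤ r j) (hsum : ∑ j, r j = n)
    (f : ℂ[X]) (hf : f = ∏ j, (X - C (l j)) ^ r j)
    (zn1 : ℂ) (hzn1 : (derivative^[n - 1] f).eval zn1 = 0)
    (zn2 : ℂ) (hzn2 : (derivative^[n - 2] f).eval zn2 = 0) :
    ∀ z : ℂ, (zn1 - zn2) ^ 2 =
      (1 / ((n : ℂ) * ((n : ℂ) - 1))) *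
        ((∑ j, (r j : ℂ) * (l j - z) ^ 2) - (n : ℂ) * (zn1 - z) ^ 2) := by
  intro z
  obtain ⟨m, rfl⟩ : ∃ m, n = m + 2 := ⟨n - 2, by omega⟩
  set s : Multiset ℂ := ∑ j, (r j) • ({l j} : Multiset ℂ) with hs
  have hcard : Multiset.card s = m + 2 := by
    rw [hs, ← hsum]
    simp
  have hfs : f = (s.map fun a => X - C a).prod := by
    rw [hf, hs, ← Multiset.coe_mapAddMonoidHom,
      map_sum (Multiset.mapAddMonoidHom fun a => X - C a) _ Finset.univ, Multiset.prod_sum]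
    refine Finset.prod_congr rfl fun j _ => ?_
    simp [Multiset.coe_mapAddMonoidHom, Multiset.map_nsmul, Multiset.nsmul_singleton,
      Multiset.prod_replicate]
  have hS1 : s.sum = ∑ j, (r j : ℂ) * l j := by
    rw [hs, Multiset.sum_sum]
    refine Finset.sum_congr rfl fun j _ => ?_
    simp [Multiset.nsmul_singleton, Multiset.sum_replicate, nsmul_eq_mul]
  have hS2 : (s.map (· ^ 2)).sum = ∑ j, (r j : ℂ) * (l j) ^ 2 := by
    rw [hs, ← Multiset.coe_mapAddMonoidHom,
      map_sum (Multiset.mapAddMonoidHom (· ^ 2)) _ Finset.univ, Multiset.sum_sum]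
    refine Finset.sum_congr rfl fun j _ => ?_
    simp [Multiset.coe_mapAddMonoidHom, Multiset.map_nsmul, Multiset.nsmul_singleton,
      Multiset.sum_replicate, nsmul_eq_mul]
  -- monic, degree, coefficients
  have hmonic : f.Monic := by
    rw [hf]; exact monic_prod_of_monic _ _ fun j _ => (monic_X_sub_C _).pow _
  have hdeg : f.natDegree = m + 2 := by
    rw [hf, natDegree_prod_of_monic _ _ fun j _ => (monic_X_sub_C _).pow _]
    simp only [natDegree_pow, natDegree_X_sub_C, mul_one]
    exact hsum
  have c2 : f.coeff (m + 2) = 1 := by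
    have := hmonic.coeff_natDegree
    rwa [hdeg] at this
  have c1 : f.coeff (m + 1) = -s.sum := by
    have h := Multiset.prod_X_sub_C_coeff s (k := m + 1) (by rw [hcard]; omega)
    rw [hcard, show m + 2 - (m + 1) = 1 by omega, esymm_one', pow_one] at h
    rw [hfs, h]; ring
  have c0 : f.coeff m = s.esymm 2 := by
    have h := Multiset.prod_X_sub_C_coeff s (k := m) (by rw [hcard]; omega)
    rw [hcard, show m + 2 - m = 2 by omega] at h
    rw [hfs, h]; ring
  -- derivative equations
  have hfacm : ((m.factorial : ℂ)) ≠ 0 := Nat.cast_ne_zero.2 (Nat.factorial_ne_zero _)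
  have hfacm1 : (((m + 1).factorial : ℂ)) ≠ 0 := Nat.cast_ne_zero.2 (Nat.factorial_ne_zero _)
  have hc1 : (((m + 1).factorial : ℕ) : ℂ) = ((m : ℂ) + 1) * (m.factorial : ℂ) := by
    rw [Nat.factorial_succ]; push_cast; ring
  have hc3 : (((m + 2).factorial : ℕ) : ℂ) = ((m : ℂ) + 2) * ((m + 1).factorial : ℂ) := by
    rw [show m + 2 = (m + 1) + 1 from rfl, Nat.factorial_succ]; push_cast; ring
  have hc2 : 2 * (((m + 2).descFactorial m : ℕ) : ℂ)
      = ((m : ℂ) + 2) * ((m : ℂ) + 1) * (m.factorial : ℂ) := by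
    have := congrArg (Nat.cast : ℕ → ℂ) (descFac2 m)
    push_cast at this
    rw [this, hc3, hc1]; ring
  have hd1 : (derivative^[m + 1] f).natDegree < 2 :=
    lt_of_le_of_lt (natDegree_iterate_derivative f (m + 1)) (by rw [hdeg]; omega)
  have hd2 : (derivative^[m] f).natDegree < 3 :=
    lt_of_le_of_lt (natDegree_iterate_derivative f m) (by rw [hdeg]; omega)
  have E1 : (((m + 1).factorial : ℕ) : ℂ) * (-s.sum)
      + (((m + 2).factorial : ℕ) : ℂ) * zn1 = 0 := by
    have h := hzn1
    rw [show m + 2 - 1 = m + 1 by omega, eval_eq_sum_range' hd1, Finset.sum_range_succ,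
      Finset.sum_range_one, coeff_iterate_derivative, coeff_iterate_derivative] at h
    simp only [zero_add, pow_zero, mul_one, pow_one, nsmul_eq_mul] at h
    rw [show 1 + (m + 1) = m + 2 by omega, Nat.descFactorial_self, descFac1 (m + 1),
      c1, c2] at h
    push_cast at h ⊢
    linear_combination h
  have E2 : ((m.factorial : ℕ) : ℂ) * (s.esymm 2)
      + (((m + 1).factorial : ℕ) : ℂ) * (-s.sum) * zn2
      + (((m + 2).descFactorial m : ℕ) : ℂ) * zn2 ^ 2 = 0 := by
    have h := hzn2
    rw [show m + 2 - 2 = m by omega, eval_eq_sum_range' hd2, Finset.sum_range_succ,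
      Finset.sum_range_succ, Finset.sum_range_one, coeff_iterate_derivative,
      coeff_iterate_derivative, coeff_iterate_derivative] at h
    simp only [zero_add, pow_zero, mul_one, pow_one, nsmul_eq_mul] at h
    rw [show 1 + m = m + 1 by omega, show 2 + m = m + 2 by omega, Nat.descFactorial_self,
      descFac1 m, c0, c1, c2] at h
    push_cast at h ⊢
    linear_combination h
  have h4 : s.sum = ((m : ℂ) + 2) * zn1 := by
    apply mul_left_cancel₀ hfacm1
    linear_combination -E1 + zn1 * hc3
  have hK2 : 2 * s.esymm 2 - 2 * ((m : ℂ) + 1) * s.sum * zn2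
      + ((m : ℂ) + 2) * ((m : ℂ) + 1) * zn2 ^ 2 = 0 := by
    apply mul_left_cancel₀ hfacm
    rw [mul_zero]
    linear_combination 2 * E2 + 2 * s.sum * zn2 * hc1 - zn2 ^ 2 * hc2
  -- final assembly
  have h3 := sq_sum' s
  have hsumC : (∑ j, (r j : ℂ)) = (m : ℂ) + 2 := by
    have := congrArg (Nat.cast : ℕ → ℂ) hsum
    push_cast at this
    exact this
  have hexp : (∑ j, (r j : ℂ) * (l j - z) ^ 2)
      = (∑ j, (r j : ℂ) * (l j) ^ 2) - 2 * z * (∑ j, (r j : ℂ) * l j)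
        + ((m : ℂ) + 2) * z ^ 2 := by
    rw [Finset.sum_congr rfl fun j (_ : j ∈ Finset.univ) =>
        show (r j : ℂ) * (l j - z) ^ 2
          = ((r j : ℂ) * (l j) ^ 2 - 2 * z * ((r j : ℂ) * l j)) + (r j : ℂ) * z ^ 2
        from by ring,
      Finset.sum_add_distrib, Finset.sum_sub_distrib, ← Finset.mul_sum, ← Finset.sum_mul,
      hsumC]
  have hne : (((m : ℂ) + 2) * (((m : ℂ) + 2) - 1)) ≠ 0 := by
    apply mul_ne_zero
    · exact_mod_cast (Nat.cast_ne_zero (R := ℂ)).2 (show m + 2 ≠ 0 by omega)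
    · have : ((m : ℂ) + 2) - 1 = ((m + 1 : ℕ) : ℂ) := by push_cast; ring
      rw [this]
      exact (Nat.cast_ne_zero (R := ℂ)).2 (show m + 1 ≠ 0 by omega)
  push_cast
  rw [hexp, one_div, inv_mul_eq_div, eq_div_iff hne]
  linear_combination h3 + hK2
    + (-s.sum + 2 * z + 2 * ((m : ℂ) + 1) * zn2 - ((m : ℂ) + 2) * zn1) * h4
    + hS2 - 2 * z * hS1
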